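/- Let p be an odd prime, A, B integers with p ∤ B·(A²−4B), and Δ = A²−4B. Then v_{p−(Δ/p)}(A,B) ≡ B^{(1−(Δ/p))/2}·(B^{p−1} + 1) (mod p²). -/

import Mathlib

/-- Lucas sequence `u n (A, B)`: `u 0 = 0`, `u 1 = 1`, `u (n+2) = A * u (n+1) - B * u n`. -/
def lucasU (A B : ℤ) : ℕ → ℤ
  | 0 => 0
  | 1 => 1
  | n + 2 => A * lucasU A B (n + 1) - B * lucasU A B n

/-- Companion Lucas sequence `v n (A, B)`: `v 0 = 2`, `v 1 = A`, `v (n+2) = A * v (n+1) - B * v n`. -/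
def lucasV (A B : ℤ) : ℕ → ℤ
  | 0 => 2
  | 1 => A
  | n + 2 => A * lucasV A B (n + 1) - B * lucasV A B n

lemma lucas_pair (A B : ℤ) (n : ℕ) :
    2 * lucasV A B (n + 1) = A * lucasV A B n + (A ^ 2 - 4 * B) * lucasU A B n ∧
    2 * lucasU A B (n + 1) = lucasV A B n + A * lucasU A B n := by
  induction n with
  | zero => simp [lucasU, lucasV]; ring
  | succ n ih =>
    obtain ⟨h1, h2⟩ := ih
    constructor
    · have : 2 * (2 * lucasV A B (n + 2)) =
          2 * (A * lucasV A B (n + 1) + (A ^ 2 - 4 * B) * lucasU A B (n + 1)) := by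
        simp only [lucasV]
        linear_combination A * h1 - (A ^ 2 - 4 * B) * h2
      exact mul_left_cancel₀ two_ne_zero this
    · have : 2 * (2 * lucasU A B (n + 2)) =
          2 * (lucasV A B (n + 1) + A * lucasU A B (n + 1)) := by
        simp only [lucasU]
        linear_combination A * h2 - h1
      exact mul_left_cancel₀ two_ne_zero this

lemma lucas_norm (A B : ℤ) (n : ℕ) :
    lucasV A B n ^ 2 - (A ^ 2 - 4 * B) * lucasU A B n ^ 2 = 4 * B ^ n := by
  induction n with
  | zero => simp [lucasU, lucasV]
  | succ n ih =>
    obtain ⟨h1, h2⟩ := lucas_pair A B n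
    have : 4 * (lucasV A B (n + 1) ^ 2 - (A ^ 2 - 4 * B) * lucasU A B (n + 1) ^ 2) =
        4 * (4 * B ^ (n + 1)) := by
      linear_combination (2 * lucasV A B (n+1) + A * lucasV A B n + (A^2-4*B) * lucasU A B n) * h1
        - (A^2-4*B) * (2 * lucasU A B (n+1) + lucasV A B n + A * lucasU A B n) * h2
        + 4 * B * ih
    exact mul_left_cancel₀ four_ne_zero this

open Polynomial in
lemma lucas_modp (A B : ℤ) (p : ℕ) [Fact p.Prime] (hp2 : p ≠ 2)
    (hΔ : ¬ (p : ℤ) ∣ (A ^ 2 - 4 * B)) :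
    ((lucasV A B p : ℤ) : ZMod p) = (A : ZMod p) ∧
    ((lucasU A B p : ℤ) : ZMod p) = ((legendreSym p (A ^ 2 - 4 * B) : ℤ) : ZMod p) := by
  have hp : p.Prime := Fact.out
  set K := ZMod p
  set C : K := ((A ^ 2 - 4 * B : ℤ) : K) with hC
  set f : K[X] := X ^ 2 - Polynomial.C C with hf
  have hdeg : f.degree = 2 := by
    simpa [hf] using degree_X_pow_sub_C (by norm_num : 0 < 2) C
  set S := AdjoinRoot f with hS
  have hdeg0 : f.degree ≠ 0 := by rw [hdeg]; decide
  have : Nontrivial S := AdjoinRoot.nontrivial f hdeg0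
  have inj : Function.Injective (algebraMap K S) := by
    rw [AdjoinRoot.algebraMap_eq]
    exact (AdjoinRoot.of f).injective
  set s : S := AdjoinRoot.root f with hs
  have hs2 : s ^ 2 = algebraMap K S C := by
    have h0 := AdjoinRoot.eval₂_root f
    rw [hf] at h0
    rw [AdjoinRoot.algebraMap_eq]
    simpa [sub_eq_zero] using h0
  have hcast : ∀ x : ℤ, ((x : ℤ) : S) = algebraMap K S ((x : ℤ) : K) := by
    intro x; rw [map_intCast]
  have hs2' : s ^ 2 = ((A ^ 2 - 4 * B : ℤ) : S) := by rw [hs2, hcast]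
  set w : S := ((A : ℤ) : S) + s with hw
  set w' : S := ((A : ℤ) : S) - s with hw'
  have hwsq : w ^ 2 = 2 * ((A:ℤ):S) * w - 4 * ((B:ℤ):S) := by
    rw [hw]; simp only [S, K] at hs2'; push_cast at hs2' ⊢; linear_combination hs2'
  have hwsq' : w' ^ 2 = 2 * ((A:ℤ):S) * w' - 4 * ((B:ℤ):S) := by
    rw [hw']; simp only [S, K] at hs2'; push_cast at hs2' ⊢; linear_combination hs2'
  -- main induction
  have key : ∀ n : ℕ,
      ((2:S) ^ n * ((lucasV A B n : ℤ) : S) = w ^ n + w' ^ n ∧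
       (2:S) ^ n * ((lucasU A B n : ℤ) : S) * s = w ^ n - w' ^ n) ∧
      ((2:S) ^ (n+1) * ((lucasV A B (n+1) : ℤ) : S) = w ^ (n+1) + w' ^ (n+1) ∧
       (2:S) ^ (n+1) * ((lucasU A B (n+1) : ℤ) : S) * s = w ^ (n+1) - w' ^ (n+1)) := by
    intro n
    induction n with
    | zero =>
      refine ⟨⟨?_, ?_⟩, ?_, ?_⟩ <;> simp [lucasU, lucasV, hw, hw'] <;> ring
    | succ n ih =>
      obtain ⟨⟨ih1, ih2⟩, ih1', ih2'⟩ := ih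
      refine ⟨⟨ih1', ih2'⟩, ?_, ?_⟩
      · have hv : ((lucasV A B (n+2) : ℤ) : S)
            = ((A:ℤ):S) * ((lucasV A B (n+1) : ℤ) : S) - ((B:ℤ):S) * ((lucasV A B n : ℤ) : S) := by
          simp only [lucasV]; push_cast; ring
        rw [hv]
        linear_combination (-(w^n)) * hwsq - (w'^n) * hwsq'
          + 2*((A:ℤ):S) * ih1' - 4*((B:ℤ):S) * ih1
      · have hu : ((lucasU A B (n+2) : ℤ) : S)
            = ((A:ℤ):S) * ((lucasU A B (n+1) : ℤ) : S) - ((B:ℤ):S) * ((lucasU A B n : ℤ) : S) := by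
          simp only [lucasU]; push_cast; ring
        rw [hu]
        linear_combination (-(w^n)) * hwsq + (w'^n) * hwsq'
          + 2*((A:ℤ):S) * ih2' - 4*((B:ℤ):S) * ih2
  -- Frobenius
  haveI : CharP S p := charP_of_injective_algebraMap inj p
  have hApow : ((A:ℤ):S) ^ p = ((A:ℤ):S) := by
    rw [hcast, ← map_pow, ZMod.pow_card]
  have hodd : p % 2 = 1 := Nat.odd_iff.mp (hp.odd_of_ne_two hp2)
  have hpsplit : 2 * (p / 2) + 1 = p := by omega
  have hsp : s ^ p = ((legendreSym p (A ^ 2 - 4 * B) : ℤ) : S) * s := by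
    have : s ^ p = (s ^ 2) ^ (p / 2) * s := by
      rw [← pow_mul, ← pow_succ, hpsplit]
    rw [this, hs2, ← map_pow, ← legendreSym.eq_pow, hcast]
  have hwp : w ^ p = ((A:ℤ):S) + ((legendreSym p (A ^ 2 - 4 * B) : ℤ) : S) * s := by
    rw [hw, add_pow_char, hApow, hsp]
  have hwp' : w' ^ p = ((A:ℤ):S) - ((legendreSym p (A ^ 2 - 4 * B) : ℤ) : S) * s := by
    have : w' = ((A:ℤ):S) + (-s) := by rw [hw']; ring
    rw [this, add_pow_char, hApow, Odd.neg_pow (Nat.odd_iff.mpr hodd), hsp]; ring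
  have h2p : (2:S) ^ p = 2 := by
    have : (2:S) = algebraMap K S 2 := by rw [map_ofNat]
    rw [this, ← map_pow, ZMod.pow_card]
  have h2u : IsUnit (2:S) := by
    have h2K : (2:K) ≠ 0 := by
      have : ((2:ℕ):K) ≠ 0 := by
        rw [Ne, ZMod.natCast_eq_zero_iff]
        exact fun hd => hp2 ((Nat.prime_dvd_prime_iff_eq hp Nat.prime_two).mp hd)
      simpa using this
    have : (2:S) = algebraMap K S 2 := by rw [map_ofNat]
    rw [this]
    exact (IsUnit.map (algebraMap K S) (isUnit_iff_ne_zero.mpr h2K))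
  have hCK : C ≠ 0 := by
    rw [hC, Ne, ZMod.intCast_zmod_eq_zero_iff_dvd]; exact hΔ
  have hsu : IsUnit s := by
    refine IsUnit.of_mul_eq_one (a := s) (algebraMap K S C⁻¹ * s) ?_
    have : s * (algebraMap K S C⁻¹ * s) = algebraMap K S C⁻¹ * s ^ 2 := by ring
    rw [this, hs2, ← map_mul, inv_mul_cancel₀ hCK, map_one]
  -- extract v_p
  constructor
  · have hk := (key p).1.1
    rw [h2p, hwp, hwp'] at hk
    have hv1 : (2:S) * ((lucasV A B p : ℤ) : S) = 2 * ((A:ℤ):S) := by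
      linear_combination hk
    have hv2 : ((lucasV A B p : ℤ) : S) = ((A:ℤ):S) := h2u.mul_left_cancel hv1
    apply inj
    rw [← hcast, ← hcast]
    exact hv2
  · have hk := (key p).1.2
    rw [h2p, hwp, hwp'] at hk
    have hu1 : s * (2 * ((lucasU A B p : ℤ) : S))
        = s * (2 * ((legendreSym p (A ^ 2 - 4 * B) : ℤ) : S)) := by
      linear_combination hk
    have hu2 := hsu.mul_left_cancel hu1
    have hu3 := h2u.mul_left_cancel hu2
    apply inj
    rw [← hcast, ← hcast]
    exact hu3


lemma lucas_final_step (p : ℕ) (hp : p.Prime) (V Cg U D Bn : ℤ)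
    (hid : V ^ 2 - D * U ^ 2 = 4 * Bn) (hU : (p:ℤ) ∣ U) (hsq : (p:ℤ) ^ 2 ∣ Cg ^ 2 - 4 * Bn)
    (hnd : ¬ (p:ℤ) ∣ (V + Cg)) : (p:ℤ) ^ 2 ∣ V - Cg := by
  have hco : IsCoprime ((p:ℤ) ^ 2) (V + Cg) :=
    IsCoprime.pow_left ((Nat.prime_iff_prime_int.mp hp).coprime_iff_not_dvd.mpr hnd)
  have hdvd : (p:ℤ) ^ 2 ∣ (V - Cg) * (V + Cg) := by
    have he : (V - Cg) * (V + Cg) = D * U ^ 2 - (Cg ^ 2 - 4 * Bn) := by linear_combination hid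
    rw [he]
    exact dvd_sub (Dvd.dvd.mul_left (pow_dvd_pow_of_dvd hU 2) D) hsq
  exact hco.dvd_of_dvd_mul_right hdvd

theorem lucasV_congr (A B : ℤ) (p : ℕ) [Fact p.Prime] (hp2 : p ≠ 2)
    (h : ¬ (p : ℤ) ∣ B * (A ^ 2 - 4 * B)) :
    ((p : ℤ) ^ 2) ∣
      lucasV A B ((p : ℤ) - legendreSym p (A ^ 2 - 4 * B)).toNat
        - B ^ (((1 - legendreSym p (A ^ 2 - 4 * B)) / 2).toNat) * (B ^ (p - 1) + 1) := by
  have hp : p.Prime := Fact.out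
  have hB : ¬ (p:ℤ) ∣ B := fun hd => h (hd.mul_right _)
  have hΔ : ¬ (p:ℤ) ∣ (A ^ 2 - 4 * B) := fun hd => h (hd.mul_left _)
  set K := ZMod p with hK
  have hΔK : ((A ^ 2 - 4 * B : ℤ) : K) ≠ 0 := by
    rw [Ne, ZMod.intCast_zmod_eq_zero_iff_dvd]; exact hΔ
  have hBK : ((B : ℤ) : K) ≠ 0 := by
    rw [Ne, ZMod.intCast_zmod_eq_zero_iff_dvd]; exact hB
  have h2K : (2 : K) ≠ 0 := by
    have : ((2:ℕ) : K) ≠ 0 := by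
      rw [Ne, ZMod.natCast_eq_zero_iff]
      exact fun hd => hp2 ((Nat.prime_dvd_prime_iff_eq hp Nat.prime_two).mp hd)
    simpa using this
  obtain ⟨m, rfl⟩ : ∃ m, p = m + 2 := ⟨p - 2, by have := hp.two_le; omega⟩
  obtain ⟨hvp, hup⟩ := lucas_modp A B (m + 2) hp2 hΔ
  have hpm1 : m + 2 - 1 = m + 1 := by omega
  have hBpow : ((B : ℤ) : K) ^ (m + 1) = 1 := by
    have := ZMod.pow_card_sub_one_eq_one hBK
    rwa [show m + 2 - 1 = m + 1 from rfl] at this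
  have hBdvd : ((m + 2 : ℕ) : ℤ) ∣ B ^ (m + 1) - 1 := by
    rw [← ZMod.intCast_zmod_eq_zero_iff_dvd]
    push_cast
    rw [hBpow]; ring
  -- pair identities and recurrences, cast to K
  have h1 := (lucas_pair A B (m + 2)).1
  have h2 := (lucas_pair A B (m + 2)).2
  have e1 := congrArg (fun x : ℤ => (x : K)) h1
  have e2 := congrArg (fun x : ℤ => (x : K)) h2
  simp only [K] at e1 e2; push_cast at e1 e2
  have r1 : ((lucasV A B (m + 3) : ℤ) : K)
      = ((A:ℤ):K) * ((lucasV A B (m + 2) : ℤ) : K) - ((B:ℤ):K) * ((lucasV A B (m + 1) : ℤ) : K) := by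
    have : lucasV A B (m + 1 + 2) = A * lucasV A B (m + 1 + 1) - B * lucasV A B (m + 1) := by
      simp [lucasV]
    rw [show m + 3 = m + 1 + 2 from rfl, this]
    simp only [K]; push_cast; ring
  have r2 : ((lucasU A B (m + 3) : ℤ) : K)
      = ((A:ℤ):K) * ((lucasU A B (m + 2) : ℤ) : K) - ((B:ℤ):K) * ((lucasU A B (m + 1) : ℤ) : K) := by
    have : lucasU A B (m + 1 + 2) = A * lucasU A B (m + 1 + 1) - B * lucasU A B (m + 1) := by
      simp [lucasU]
    rw [show m + 3 = m + 1 + 2 from rfl, this]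
    simp only [K]; push_cast; ring
  have hεor := @legendreSym.eq_one_or_neg_one (m + 2) _ (A ^ 2 - 4 * B) hΔK
  rcases hεor with hε | hε <;> rw [hε]
  · -- ε = 1 : index p - 1 = m + 1
    have hidx : (((m + 2 : ℕ) : ℤ) - 1).toNat = m + 1 := by omega
    have hexp : (((1 : ℤ) - 1) / 2).toNat = 0 := by norm_num
    rw [hidx, hexp, hpm1, pow_zero, one_mul]
    have hε' : ((legendreSym (m + 2) (A ^ 2 - 4 * B) : ℤ) : K) = 1 := by rw [hε]; norm_num
    rw [hε'] at hup
    -- u_{m+1} ≡ 0 and v_{m+1} ≡ 2 mod p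
    have hu1 : (2:K) * ((B:ℤ):K) * ((lucasU A B (m + 1) : ℤ) : K) = 0 := by
      linear_combination 2 * r2 - e2 - hvp + ((A:ℤ):K) * hup
    have hUK : ((lucasU A B (m + 1) : ℤ) : K) = 0 :=
      (mul_eq_zero.mp hu1).resolve_left (mul_ne_zero h2K hBK)
    have hv1 : (2:K) * ((B:ℤ):K) * ((lucasV A B (m + 1) : ℤ) : K) = 4 * ((B:ℤ):K) := by
      linear_combination 2 * r1 - e1 + ((A:ℤ):K) * hvp - (((A:ℤ):K)^2 - 4*((B:ℤ):K)) * hup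
    have hVK : ((lucasV A B (m + 1) : ℤ) : K) = 2 := by
      have h4 : (2:K) * ((B:ℤ):K) * 2 = 4 * ((B:ℤ):K) := by ring
      have := hv1.trans h4.symm
      exact mul_left_cancel₀ (mul_ne_zero h2K hBK) this
    refine lucas_final_step (m + 2) hp _ _ (lucasU A B (m + 1)) (A ^ 2 - 4 * B) (B ^ (m + 1))
      (lucas_norm A B (m + 1)) ?_ ?_ ?_
    · rw [← ZMod.intCast_zmod_eq_zero_iff_dvd]; exact hUK
    · have : (B ^ (m + 1) + 1) ^ 2 - 4 * B ^ (m + 1) = (B ^ (m + 1) - 1) ^ 2 := by ring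
      rw [this]
      exact pow_dvd_pow_of_dvd hBdvd 2
    · rw [← ZMod.intCast_zmod_eq_zero_iff_dvd]
      push_cast
      rw [hVK, hBpow]
      intro hcon
      have h4 : (2:K) * 2 = 0 := by linear_combination hcon
      exact h2K (mul_self_eq_zero.mp h4)
  · -- ε = -1 : index p + 1 = m + 3
    have hidx : (((m + 2 : ℕ) : ℤ) - (-1)).toNat = m + 3 := by omega
    have hexp : (((1 : ℤ) - (-1)) / 2).toNat = 1 := by norm_num
    rw [hidx, hexp, hpm1, pow_one]
    have hε' : ((legendreSym (m + 2) (A ^ 2 - 4 * B) : ℤ) : K) = -1 := by rw [hε]; norm_num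
    rw [hε'] at hup
    have hUK : ((lucasU A B (m + 3) : ℤ) : K) = 0 := by
      have hu1 : (2:K) * ((lucasU A B (m + 3) : ℤ) : K) = 0 := by
        linear_combination e2 + hvp + ((A:ℤ):K) * hup
      exact (mul_eq_zero.mp hu1).resolve_left h2K
    have hVK : ((lucasV A B (m + 3) : ℤ) : K) = 2 * ((B:ℤ):K) := by
      have hv1 : (2:K) * ((lucasV A B (m + 3) : ℤ) : K) = 2 * (2 * ((B:ℤ):K)) := by
        linear_combination e1 + ((A:ℤ):K) * hvp + (((A:ℤ):K)^2 - 4*((B:ℤ):K)) * hup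
      exact mul_left_cancel₀ h2K hv1
    refine lucas_final_step (m + 2) hp _ _ (lucasU A B (m + 3)) (A ^ 2 - 4 * B) (B ^ (m + 3))
      (lucas_norm A B (m + 3)) ?_ ?_ ?_
    · rw [← ZMod.intCast_zmod_eq_zero_iff_dvd]; exact hUK
    · have : (B * (B ^ (m + 1) + 1)) ^ 2 - 4 * B ^ (m + 3) = (B * (B ^ (m + 1) - 1)) ^ 2 := by
        ring
      rw [this]
      exact pow_dvd_pow_of_dvd (hBdvd.mul_left B) 2
    · rw [← ZMod.intCast_zmod_eq_zero_iff_dvd]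
      push_cast
      rw [hVK, hBpow]
      intro hcon
      have h4 : (2:K) * (2 * ((B:ℤ):K)) = 0 := by linear_combination hcon
      have h5 := (mul_eq_zero.mp h4).resolve_left h2K
      exact hBK ((mul_eq_zero.mp h5).resolve_left h2K)
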